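/- Suppose every coupling J_B (B ∈ 𝔅) is independently Gaussian with mean J_{0,B} ∈ ℝ and variance Λ_B² > 0, and fix A ∈ 𝔅. Then the third-moment quenched average satisfies E[ −(J_A − J_{0,A})³ ⟨σ_A⟩_J ]_{{J_{0,B}, Λ_B²}} ≥ E[ −J³ tanh(β J) ]_{{0, Λ_A²}}, where the right-hand side is the expectation of −x³ tanh(β x) under a centered Gaussian with variance Λ_A². -/

import Mathlib

open MeasureTheory Real Finset ProbabilityTheory
open scoped NNReal ENNReal

/-- The spin value of a Boolean: `true ↦ 1`, `false ↦ -1`. -/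
noncomputable def spinVal (b : Bool) : ℝ := if b then 1 else -1

/-- `σ_B = ∏ i ∈ B, σ_i`. -/
noncomputable def sigmaSet {V : Type} (σ : V → Bool) (B : Finset V) : ℝ :=
  ∏ i ∈ B, spinVal (σ i)

lemma frac_key {S M u : ℝ} (hS : 0 < S) (hM : 0 < M) (hu : 1 ≤ u) :
    (S*u - M)/(S*u + M) - (S - u*M)/(S + u*M) ≤ 2*((u-1)/(u+1)) := by
  have hu0 : (0:ℝ) < u := lt_of_lt_of_le one_pos hu
  have d1 : 0 < S*u + M := by positivity
  have d2 : 0 < S + u*M := by positivity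
  have d3 : (0:ℝ) < u + 1 := by linarith
  rw [div_sub_div _ _ d1.ne' d2.ne', mul_div_assoc', div_le_div_iff₀ (mul_pos d1 d2) d3]
  nlinarith [mul_nonneg (mul_nonneg (sub_nonneg.2 hu) hu0.le) (sq_nonneg (S-M))]


lemma tanh_eq' (y : ℝ) : Real.tanh y = (Real.exp (2*y) - 1)/(Real.exp (2*y) + 1) := by
  have h1 : Real.exp (2*y) = Real.exp y * Real.exp y := by
    rw [← Real.exp_add]; ring_nf
  have h2 : (0:ℝ) < Real.exp y := Real.exp_pos y
  have h3 : (0:ℝ) < Real.exp (2*y) + 1 := by positivity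
  rw [Real.tanh_eq_sinh_div_cosh, Real.sinh_eq, Real.cosh_eq, Real.exp_neg]
  rw [div_div_div_cancel_right₀]
  · field_simp
    linear_combination (-2 : ℝ) * h1
  · norm_num


lemma sigmaSet_dichotomy {V : Type} (σ : V → Bool) (B : Finset V) :
    sigmaSet σ B = 1 ∨ sigmaSet σ B = -1 := by
  unfold sigmaSet
  refine Finset.prod_induction _ (fun x => x = 1 ∨ x = -1) ?_ (Or.inl rfl) ?_
  · rintro x y (rfl|rfl) (rfl|rfl) <;> norm_num
  · intro i _
    unfold spinVal
    cases σ i <;> simp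

lemma abs_sigmaSet {V : Type} (σ : V → Bool) (B : Finset V) : |sigmaSet σ B| = 1 := by
  rcases sigmaSet_dichotomy σ B with h | h <;> rw [h] <;> norm_num

open Classical in
/-- Partial partition function restricted to configurations with `σ_A = spinVal s`,
with the coupling on `a` removed. -/
noncomputable def Zspin {V : Type} [Fintype V] [DecidableEq V] (β : ℝ)
    (ℬ : Finset (Finset V)) (a : ℬ) (J : ℬ → ℝ) (s : Bool) : ℝ :=
  ∑ σ ∈ Finset.univ.filter (fun σ : V → Bool => sigmaSet σ (a : Finset V) = spinVal s),
    Real.exp (β * ∑ B ∈ Finset.univ.erase a, J B * sigmaSet σ (B : Finset V))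

lemma Zspin_pos {V : Type} [Fintype V] [DecidableEq V] (β : ℝ)
    (ℬ : Finset (Finset V)) (a : ℬ) (hane : (a : Finset V).Nonempty) (J : ℬ → ℝ) (s : Bool) :
    0 < Zspin β ℬ a J s := by
  classical
  refine Finset.sum_pos (fun σ _ => Real.exp_pos _) ?_
  obtain ⟨i0, hi0⟩ := hane
  cases s
  · refine ⟨fun j => decide (j ≠ i0), ?_⟩
    simp only [Finset.mem_filter, Finset.mem_univ, true_and]
    unfold sigmaSet spinVal
    rw [Finset.prod_eq_single i0 ?_ (by simp [hi0])]
    · simp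
    · intro b _ hb; simp [hb]
  · refine ⟨fun _ => true, ?_⟩
    simp only [Finset.mem_filter, Finset.mem_univ, true_and]
    unfold sigmaSet spinVal
    simp

lemma Zspin_congr {V : Type} [Fintype V] [DecidableEq V] (β : ℝ)
    (ℬ : Finset (Finset V)) (a : ℬ) (J J' : ℬ → ℝ) (h : ∀ i, i ≠ a → J' i = J i) (s : Bool) :
    Zspin β ℬ a J' s = Zspin β ℬ a J s := by
  classical
  unfold Zspin
  refine Finset.sum_congr rfl fun σ _ => ?_
  congr 1
  refine congrArg (β * ·) (Finset.sum_congr rfl fun B hB => ?_)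
  rw [h B (Finset.mem_erase.mp hB).1]

lemma sum_decomp {V : Type} [Fintype V] [DecidableEq V] (β : ℝ)
    (ℬ : Finset (Finset V)) (a : ℬ) (J : ℬ → ℝ) (w : ℝ → ℝ) :
    ∑ σ : V → Bool, w (sigmaSet σ (a : Finset V)) *
        Real.exp (β * ∑ B : ℬ, J B * sigmaSet σ (B : Finset V))
      = w 1 * (Real.exp (β * J a) * Zspin β ℬ a J true)
        + w (-1) * (Real.exp (-(β * J a)) * Zspin β ℬ a J false) := by
  classical
  rw [← Finset.sum_filter_add_sum_filter_not Finset.univ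
    (fun σ : V → Bool => sigmaSet σ (a : Finset V) = spinVal true)]
  have hfil : Finset.univ.filter
      (fun σ : V → Bool => ¬ sigmaSet σ (a : Finset V) = spinVal true)
      = Finset.univ.filter (fun σ : V → Bool => sigmaSet σ (a : Finset V) = spinVal false) := by
    refine Finset.filter_congr fun σ _ => ?_
    unfold spinVal
    rcases sigmaSet_dichotomy σ (a : Finset V) with h | h <;> simp [h] <;> norm_num <;> norm_num
  rw [hfil]
  unfold Zspin
  simp only [Finset.mul_sum]
  congr 1
  · refine Finset.sum_congr rfl fun σ hσ => ?_
    have hs : sigmaSet σ (a : Finset V) = 1 := by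
      simpa [spinVal] using (Finset.mem_filter.mp hσ).2
    rw [← Real.exp_add]
    congr 2
    rw [← Finset.add_sum_erase Finset.univ
      (fun B : ℬ => β * (J B * sigmaSet σ (B : Finset V))) (Finset.mem_univ a), hs]
    ring
  · refine Finset.sum_congr rfl fun σ hσ => ?_
    have hs : sigmaSet σ (a : Finset V) = -1 := by
      simpa [spinVal] using (Finset.mem_filter.mp hσ).2
    rw [← Real.exp_add]
    congr 2
    rw [← Finset.add_sum_erase Finset.univ
      (fun B : ℬ => β * (J B * sigmaSet σ (B : Finset V))) (Finset.mem_univ a), hs]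
    ring


/-- The Gibbs (thermal) average `⟨σ_A⟩_J` at inverse temperature `β` for the Hamiltonian
`H(σ) = -∑_{B ∈ ℬ} J_B σ_B`. -/
noncomputable def gibbsAvg {V : Type} [Fintype V] [DecidableEq V] (β : ℝ)
    (ℬ : Finset (Finset V)) (J : ℬ → ℝ) (A : Finset V) : ℝ :=
  (∑ σ : V → Bool, sigmaSet σ A * Real.exp (β * ∑ B : ℬ, J B * sigmaSet σ (B : Finset V))) /
  (∑ σ : V → Bool, Real.exp (β * ∑ B : ℬ, J B * sigmaSet σ (B : Finset V)))

lemma gibbsAvg_eq {V : Type} [Fintype V] [DecidableEq V] (β : ℝ)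
    (ℬ : Finset (Finset V)) (a : ℬ) (J : ℬ → ℝ) :
    gibbsAvg β ℬ J (a : Finset V)
      = (Real.exp (β * J a) * Zspin β ℬ a J true
          - Real.exp (-(β * J a)) * Zspin β ℬ a J false)
        / (Real.exp (β * J a) * Zspin β ℬ a J true
          + Real.exp (-(β * J a)) * Zspin β ℬ a J false) := by
  unfold gibbsAvg
  have h1 : (∑ σ : V → Bool, sigmaSet σ (a : Finset V) *
      Real.exp (β * ∑ B : ℬ, J B * sigmaSet σ (B : Finset V)))
      = Real.exp (β * J a) * Zspin β ℬ a J true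
        - Real.exp (-(β * J a)) * Zspin β ℬ a J false := by
    have := sum_decomp β ℬ a J (fun x => x)
    rw [this]
    try ring
  have h2 : (∑ σ : V → Bool, Real.exp (β * ∑ B : ℬ, J B * sigmaSet σ (B : Finset V)))
      = Real.exp (β * J a) * Zspin β ℬ a J true
        + Real.exp (-(β * J a)) * Zspin β ℬ a J false := by
    have := sum_decomp β ℬ a J (fun _ => (1:ℝ))
    simp only [one_mul] at this
    rw [this]
    try ring
  rw [h1, h2]

lemma fracE {E Zp Zm : ℝ} (hE : 0 < E) :
    (E*Zp - E⁻¹*Zm)/(E*Zp + E⁻¹*Zm) = (E^2*Zp - Zm)/(E^2*Zp + Zm) := by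
  rw [← mul_div_mul_left (E*Zp - E⁻¹*Zm) (E*Zp + E⁻¹*Zm) (ne_of_gt hE)]
  have hne : E ≠ 0 := ne_of_gt hE
  congr 1 <;> field_simp <;> ring

/-- Key deterministic inequality: flipping `J_a` around its midpoint. -/
lemma gibbs_diff_le {V : Type} [Fintype V] [DecidableEq V] (β : ℝ) (hβ : 0 ≤ β)
    (ℬ : Finset (Finset V)) (a : ℬ) (hane : (a : Finset V).Nonempty)
    (J J' : ℬ → ℝ) (x : ℝ) (hx : 0 ≤ x)
    (hoff : ∀ i, i ≠ a → J' i = J i) (hon : J' a = J a - 2*x) :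
    gibbsAvg β ℬ J (a : Finset V) - gibbsAvg β ℬ J' (a : Finset V)
      ≤ 2 * Real.tanh (β * x) := by
  have hZt := Zspin_pos β ℬ a hane J true
  have hZf := Zspin_pos β ℬ a hane J false
  rw [gibbsAvg_eq β ℬ a J, gibbsAvg_eq β ℬ a J',
    Zspin_congr β ℬ a J J' hoff true, Zspin_congr β ℬ a J J' hoff false, hon]
  set Zp := Zspin β ℬ a J true with hZpdef
  set Zm := Zspin β ℬ a J false with hZmdef
  rw [Real.exp_neg, Real.exp_neg, fracE (Real.exp_pos (β * J a)),
    fracE (Real.exp_pos (β * (J a - 2*x)))]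
  set u : ℝ := Real.exp (2*(β*x)) with hu
  set S : ℝ := Real.exp (2*(β*(J a - x))) * Zp with hS
  have hu1 : (1:ℝ) ≤ u := by
    rw [hu, ← Real.exp_zero]
    exact Real.exp_le_exp.mpr (by nlinarith)
  have hu0 : (0:ℝ) < u := lt_of_lt_of_le one_pos hu1
  have hSpos : 0 < S := mul_pos (Real.exp_pos _) hZt
  have hcomb1 : Real.exp (2*(β*(J a - x))) * Real.exp (2*(β*x))
      = Real.exp (β*J a + β*J a) := by
    rw [← Real.exp_add]; congr 1; ring
  have key1 : Real.exp (β * J a) ^ 2 * Zp = S * u := by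
    rw [hS, hu, sq, ← Real.exp_add, ← hcomb1]; ring
  have hcomb2 : Real.exp (2*(β*x)) * Real.exp (β * (J a - 2*x) + β * (J a - 2*x))
      = Real.exp (2*(β*(J a - x))) := by
    rw [← Real.exp_add]; congr 1; ring
  have key2 : u * (Real.exp (β * (J a - 2*x)) ^ 2 * Zp) = S := by
    rw [hu, sq, ← Real.exp_add, hS, ← hcomb2]; ring
  have hfrac2 : (Real.exp (β * (J a - 2*x)) ^ 2 * Zp - Zm)
      / (Real.exp (β * (J a - 2*x)) ^ 2 * Zp + Zm) = (S - u*Zm)/(S + u*Zm) := by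
    rw [← mul_div_mul_left (Real.exp (β * (J a - 2*x)) ^ 2 * Zp - Zm)
      (Real.exp (β * (J a - 2*x)) ^ 2 * Zp + Zm) (ne_of_gt hu0)]
    rw [mul_sub, mul_add, key2]
  rw [key1, hfrac2]
  have htanh : Real.tanh (β*x) = (u-1)/(u+1) := by
    rw [tanh_eq' (β*x), hu]
  rw [htanh]
  exact frac_key hSpos hZf hu1

lemma abs_tanh_le_one (y : ℝ) : |Real.tanh y| ≤ 1 := by
  rw [tanh_eq' y]
  have h : (0:ℝ) < Real.exp (2*y) + 1 := by positivity
  have h2 : (0:ℝ) < Real.exp (2*y) := Real.exp_pos _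
  rw [abs_div, abs_of_pos h, div_le_one h]
  rw [abs_le]
  constructor <;> linarith

lemma den_pos {V : Type} [Fintype V] [DecidableEq V] (β : ℝ)
    (ℬ : Finset (Finset V)) (J : ℬ → ℝ) :
    0 < ∑ σ : V → Bool, Real.exp (β * ∑ B : ℬ, J B * sigmaSet σ (B : Finset V)) :=
  Finset.sum_pos (fun σ _ => Real.exp_pos _) Finset.univ_nonempty

lemma abs_gibbsAvg_le_one {V : Type} [Fintype V] [DecidableEq V] (β : ℝ)
    (ℬ : Finset (Finset V)) (J : ℬ → ℝ) (A : Finset V) :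
    |gibbsAvg β ℬ J A| ≤ 1 := by
  have hd := den_pos β ℬ J
  rw [gibbsAvg, abs_div, abs_of_pos hd, div_le_one hd]
  calc |∑ σ : V → Bool, sigmaSet σ A * Real.exp (β * ∑ B : ℬ, J B * sigmaSet σ (B : Finset V))|
      ≤ ∑ σ : V → Bool, |sigmaSet σ A * Real.exp (β * ∑ B : ℬ, J B * sigmaSet σ (B : Finset V))| :=
        Finset.abs_sum_le_sum_abs _ _
    _ = ∑ σ : V → Bool, Real.exp (β * ∑ B : ℬ, J B * sigmaSet σ (B : Finset V)) := by
        refine Finset.sum_congr rfl fun σ _ => ?_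
        rw [abs_mul, abs_sigmaSet, one_mul, abs_of_pos (Real.exp_pos _)]

lemma continuous_gibbsAvg {V : Type} [Fintype V] [DecidableEq V] (β : ℝ)
    (ℬ : Finset (Finset V)) (A : Finset V) :
    Continuous (fun J : ℬ → ℝ => gibbsAvg β ℬ J A) := by
  unfold gibbsAvg
  have hnum : Continuous (fun J : ℬ → ℝ =>
      ∑ σ : V → Bool, sigmaSet σ A * Real.exp (β * ∑ B : ℬ, J B * sigmaSet σ (B : Finset V))) := by
    refine continuous_finset_sum _ fun σ _ => Continuous.mul continuous_const ?_
    exact Real.continuous_exp.comp (Continuous.mul continuous_const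
      (continuous_finset_sum _ fun B _ =>
        Continuous.mul (continuous_apply B) continuous_const))
  have hden : Continuous (fun J : ℬ → ℝ =>
      ∑ σ : V → Bool, Real.exp (β * ∑ B : ℬ, J B * sigmaSet σ (B : Finset V))) := by
    refine continuous_finset_sum _ fun σ _ => ?_
    exact Real.continuous_exp.comp (Continuous.mul continuous_const
      (continuous_finset_sum _ fun B _ =>
        Continuous.mul (continuous_apply B) continuous_const))
  exact hnum.div hden fun J => (den_pos β ℬ J).ne'

lemma gauss_reflect (c : ℝ) (v : ℝ≥0) :
    (gaussianReal c v).map (fun x => 2*c - x) = gaussianReal c v := by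
  have h1 : (fun x : ℝ => 2*c - x) = (fun y : ℝ => y + 2*c) ∘ (fun x : ℝ => (-1) * x) := by
    funext x; simp; ring
  rw [h1, ← Measure.map_map (measurable_add_const (2*c)) (measurable_const_mul (-1))]
  have h2 : (gaussianReal c v).map (fun x : ℝ => (-1) * x) = gaussianReal (-c) v := by
    have := gaussianReal_map_const_mul (μ := c) (v := v) (-1)
    convert this using 2
    · ring
    · ext
      norm_num
  rw [show (fun x : ℝ => (-1) * x) = ((-1) * ·) from rfl] at h2
  rw [h2, gaussianReal_map_add_const]
  congr 1
  ring

lemma pi_map_eval {ι : Type*} [Fintype ι] (m : ι → Measure ℝ)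
    [∀ i, IsProbabilityMeasure (m i)] (a : ι) :
    (Measure.pi m).map (fun J => J a) = m a := by
  classical
  ext s hs
  rw [Measure.map_apply (measurable_pi_apply a) hs]
  have hpre : (fun J : ι → ℝ => J a) ⁻¹' s
      = Set.pi Set.univ (fun i => if i = a then s else Set.univ) := by
    ext J
    simp only [Set.mem_preimage, Set.mem_pi, Set.mem_univ, true_implies]
    constructor
    · intro h i
      by_cases hi : i = a
      · subst hi; simp [h]
      · simp [hi]
    · intro h
      have := h a
      simpa using this
  rw [hpre, Measure.pi_pi]
  rw [Finset.prod_eq_single a (fun i _ hi => by simp [hi]) (by simp)]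
  simp

lemma integrable_abs_cube_exp {b : ℝ} (hb : 0 < b) :
    Integrable (fun y : ℝ => |y|^3 * Real.exp (-b * y^2)) := by
  have h := (integrable_rpow_mul_exp_neg_mul_sq hb (by norm_num : (-1:ℝ) < 3)).abs
  refine h.congr (ae_of_all _ fun y => ?_)
  have h3 : y ^ (3:ℝ) = y ^ (3:ℕ) := by
    rw [← Real.rpow_natCast y 3]
    norm_num
  simp only [h3]
  rw [abs_mul, abs_pow, abs_of_pos (Real.exp_pos _)]

lemma cube_bound (y d : ℝ) : |y + d|^3 ≤ 4*(|y|^3 + |d|^3) := by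
  have h1 : |y + d| ≤ |y| + |d| := abs_add_le y d
  have hy : 0 ≤ |y| := abs_nonneg y
  have hd : 0 ≤ |d| := abs_nonneg d
  have h2 : |y + d|^3 ≤ (|y| + |d|)^3 := by
    exact pow_le_pow_left₀ (abs_nonneg _) h1 3
  nlinarith [sq_nonneg (|y| - |d|), mul_nonneg hy hd, mul_nonneg (mul_nonneg hy hy) hd,
    mul_nonneg (mul_nonneg hd hd) hy]

lemma integrable_abs_cube_gauss (m c : ℝ) {v : ℝ≥0} (hv : v ≠ 0) :
    Integrable (fun x : ℝ => |x - c|^3) (gaussianReal m v) := by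
  have hvpos : (0:ℝ) < (v:ℝ) := by positivity
  rw [gaussianReal_of_var_ne_zero m hv]
  rw [integrable_withDensity_iff (measurable_gaussianPDF m v)
    (ae_of_all _ fun x => ENNReal.ofReal_lt_top)]
  have hpdf : ∀ x, ((gaussianPDF m v x).toReal) = gaussianPDFReal m v x := fun x =>
    ENNReal.toReal_ofReal (gaussianPDFReal_nonneg m v x)
  have hb : (0:ℝ) < (2*(v:ℝ))⁻¹ := by positivity
  set K : ℝ := (Real.sqrt (2 * Real.pi * v))⁻¹ with hK
  have hKpos : 0 < K := by
    rw [hK]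
    have : (0:ℝ) < 2 * Real.pi * v := by positivity
    positivity
  -- the target function, after translation by m
  have hGint : Integrable (fun y : ℝ =>
      (4*(|y|^3 + |m - c|^3)) * (K * Real.exp (-(2*(v:ℝ))⁻¹ * y^2))) := by
    have h1 := integrable_abs_cube_exp hb
    have h2 := integrable_exp_neg_mul_sq hb
    have := (h1.const_mul (4*K)).add ((h2.const_mul (4*K*|m - c|^3)))
    refine this.congr (ae_of_all _ fun y => ?_)
    simp only [Pi.add_apply]
    ring
  have hG : Integrable (fun y : ℝ =>
      |y + (m - c)|^3 * (K * Real.exp (-(2*(v:ℝ))⁻¹ * y^2))) := by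
    refine hGint.mono' ?_ (ae_of_all _ fun y => ?_)
    · refine Continuous.aestronglyMeasurable ?_
      fun_prop
    · rw [Real.norm_eq_abs, abs_mul]
      have h1 : |(|y + (m - c)|^3)| = |y + (m-c)|^3 := abs_of_nonneg (by positivity)
      have h2 : 0 < K * Real.exp (-(2*(v:ℝ))⁻¹ * y^2) := by positivity
      rw [h1, abs_of_pos h2]
      exact mul_le_mul_of_nonneg_right (cube_bound y (m-c)) h2.le
  have hcomp := ((measurePreserving_add_right volume (-m)).integrable_comp hG.aestronglyMeasurable).mpr hG
  refine hcomp.congr (ae_of_all _ fun x => ?_)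
  simp only [Function.comp]
  rw [hpdf, gaussianPDFReal]
  have e1 : x + -m + (m - c) = x - c := by ring
  have e2 : -(2*(v:ℝ))⁻¹ * (x + -m)^2 = -(x - m)^2/(2*(v:ℝ)) := by
    field_simp
    try ring
  rw [e1, e2]
  try ring

lemma continuous_tanh' : Continuous Real.tanh := by
  have h : Real.tanh = fun x => Real.sinh x / Real.cosh x :=
    funext fun x => Real.tanh_eq_sinh_div_cosh x
  rw [h]
  exact Real.continuous_sinh.div Real.continuous_cosh fun x => (Real.cosh_pos x).ne'


/-- The product measure of independent Gaussian couplings `J_B ~ N(J_{0,B}, Λ_B²)`. -/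
noncomputable def gaussQuenched {V : Type} (ℬ : Finset (Finset V))
    (J0 : Finset V → ℝ) (Λ : Finset V → NNReal) : Measure (ℬ → ℝ) :=
  Measure.pi fun B => gaussianReal (J0 (B : Finset V)) (Λ (B : Finset V) ^ 2)

/-- For independent Gaussian couplings `J_B ~ N(J_{0,B}, Λ_B²)`, the third-moment quenched
average satisfies `E[-(J_A - J_{0,A})³ ⟨σ_A⟩_J] ≥ E[-J³ tanh(βJ)]_{N(0, Λ_A²)}`. -/
theorem gaussian_third_moment_lower_bound
    {V : Type} [Fintype V] [DecidableEq V]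
    (ℬ : Finset (Finset V)) (hℬ : ∀ B ∈ ℬ, B.Nonempty)
    (β : ℝ) (hβ : 0 < β)
    (J0 : Finset V → ℝ) (Λ : Finset V → NNReal) (hΛ : ∀ B, 0 < Λ B)
    (A : Finset V) (hA : A ∈ ℬ) :
    ∫ J, -(J ⟨A, hA⟩ - J0 A) ^ 3 * gibbsAvg β ℬ J A ∂(gaussQuenched ℬ J0 Λ)
      ≥ ∫ x, -x ^ 3 * Real.tanh (β * x) ∂(gaussianReal 0 (Λ A ^ 2)) := by
  classical
  set a : ℬ := ⟨A, hA⟩ with ha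
  set c : ℝ := J0 A with hcdef
  have hv : (Λ A ^ 2 : ℝ≥0) ≠ 0 := pow_ne_zero 2 (hΛ A).ne'
  set μ : Measure (ℬ → ℝ) := gaussQuenched ℬ J0 Λ with hμ
  have hμpi : μ = Measure.pi (fun B : ℬ => gaussianReal (J0 (B : Finset V)) (Λ (B : Finset V) ^ 2)) := rfl
  haveI : IsProbabilityMeasure μ := by rw [hμpi]; infer_instance
  -- the coordinate flip at `a`
  set T : (ℬ → ℝ) → (ℬ → ℝ) := fun J i => if i = a then 2*c - J i else J i with hT
  have hTa : ∀ J, T J a = 2*c - J a := fun J => by simp [hT]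
  have hToff : ∀ J, ∀ i, i ≠ a → T J i = J i := fun J i h => by simp [hT, h]
  have hTmeas : Measurable T := by
    refine measurable_pi_lambda _ fun i => ?_
    have hm : Measurable fun J : ℬ → ℝ => J i := measurable_pi_apply i
    by_cases h : i = a
    · simpa [hT, h] using (hm.const_sub (2*c))
    · simpa [hT, h] using hm
  have hTT : ∀ J, T (T J) = J := by
    intro J; funext i
    by_cases h : i = a
    · subst h; simp [hT]
    · simp [hT, h]
  have hTpres : MeasurePreserving T μ μ := by
    refine ⟨hTmeas, ?_⟩
    rw [hμpi]
    refine (Measure.pi_eq fun s hs => ?_).symm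
    rw [Measure.map_apply hTmeas (MeasurableSet.univ_pi hs)]
    have hpre : T ⁻¹' (Set.pi Set.univ s)
        = Set.pi Set.univ (fun i => if i = a then (fun x : ℝ => 2*c - x) ⁻¹' (s a) else s i) := by
      ext J
      simp only [Set.mem_preimage, Set.mem_pi, Set.mem_univ, true_implies]
      refine forall_congr' fun i => ?_
      by_cases h : i = a
      · subst h; simp [hT]
      · simp [hT, h]
    rw [hpre, Measure.pi_pi]
    refine Finset.prod_congr rfl fun i _ => ?_
    by_cases h : i = a
    · subst h
      simp only [if_pos rfl]
      have hmp : MeasurePreserving (fun x : ℝ => 2*c - x)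
          (gaussianReal (J0 (a : Finset V)) (Λ (a : Finset V) ^ 2))
          (gaussianReal (J0 (a : Finset V)) (Λ (a : Finset V) ^ 2)) :=
        ⟨measurable_const.sub measurable_id, gauss_reflect c (Λ A ^ 2)⟩
      exact hmp.measure_preimage (hs a).nullMeasurableSet
    · simp [h]
  have heval : μ.map (fun J => J a) = gaussianReal c (Λ A ^ 2) := by
    rw [hμpi]
    exact pi_map_eval (fun B : ℬ => gaussianReal (J0 (B : Finset V)) (Λ (B : Finset V) ^ 2)) a
  set f : (ℬ → ℝ) → ℝ := fun J => -(J a - c)^3 * gibbsAvg β ℬ J A with hfdef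
  set g : (ℬ → ℝ) → ℝ := fun J => -(J a - c)^3 * Real.tanh (β * (J a - c)) with hgdef
  have hcube : Continuous (fun J : ℬ → ℝ => -(J a - c)^3) :=
    (((continuous_apply a).sub continuous_const).pow 3).neg
  have hfcont : Continuous f := hcube.mul (continuous_gibbsAvg β ℬ A)
  have hgcont : Continuous g := hcube.mul
    (continuous_tanh'.comp (continuous_const.mul ((continuous_apply a).sub continuous_const)))
  have hbint : Integrable (fun J : ℬ → ℝ => |J a - c|^3) μ := by
    have h3 : Integrable (fun x : ℝ => |x - c|^3) (μ.map (fun J => J a)) := by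
      rw [heval]; exact integrable_abs_cube_gauss c c hv
    exact (integrable_map_measure h3.aestronglyMeasurable
      (measurable_pi_apply a).aemeasurable).mp h3
  have habs : ∀ (J : ℬ → ℝ) (r : ℝ), |r| ≤ 1 → |(-(J a - c)^3 * r)| ≤ |J a - c|^3 := by
    intro J r hr
    rw [abs_mul, abs_neg, abs_pow]
    exact mul_le_of_le_one_right (by positivity) hr
  have hfint : Integrable f μ := by
    refine hbint.mono' hfcont.aestronglyMeasurable (ae_of_all _ fun J => ?_)
    rw [Real.norm_eq_abs]
    exact habs J _ (abs_gibbsAvg_le_one β ℬ J A)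
  have hgint : Integrable g μ := by
    refine hbint.mono' hgcont.aestronglyMeasurable (ae_of_all _ fun J => ?_)
    rw [Real.norm_eq_abs]
    exact habs J _ (abs_tanh_le_one _)
  have hfTint : Integrable (fun J => f (T J)) μ :=
    (hTpres.integrable_comp hfcont.aestronglyMeasurable).mpr hfint
  -- pointwise inequality
  have hcoe : (a : Finset V) = A := rfl
  have hpt : ∀ J, g J ≤ (f J + f (T J)) / 2 := by
    intro J
    have hsum : f J + f (T J)
        = (J a - c)^3 * (gibbsAvg β ℬ (T J) A - gibbsAvg β ℬ J A) := by
      simp only [hfdef]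
      rw [hTa J]
      ring
    rw [hsum]
    simp only [hgdef]
    rcases le_or_gt 0 (J a - c) with hx0 | hx0
    · have hd := gibbs_diff_le β hβ.le ℬ a (hℬ A hA) J (T J) (J a - c) hx0
        (hToff J) (by rw [hTa J]; ring)
      rw [hcoe] at hd
      nlinarith [mul_le_mul_of_nonneg_left hd (pow_nonneg hx0 3)]
    · have hd := gibbs_diff_le β hβ.le ℬ a (hℬ A hA) (T J) J (-(J a - c))
        (by linarith) (fun i h => (hToff J i h).symm) (by rw [hTa J]; ring)
      rw [hcoe] at hd
      rw [show β * -(J a - c) = -(β * (J a - c)) by ring, Real.tanh_neg] at hd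
      have h1 : (0:ℝ) ≤ (-(J a - c))^3 := pow_nonneg (by linarith) 3
      have h2 := mul_le_mul_of_nonneg_left hd h1
      nlinarith [h2]
  -- the symmetrized integral
  have hemb : MeasurableEmbedding T :=
    MeasurableEquiv.measurableEmbedding
      { toFun := T, invFun := T, left_inv := hTT, right_inv := hTT,
        measurable_toFun := hTmeas, measurable_invFun := hTmeas }
  have hint2 : ∫ J, f (T J) ∂μ = ∫ J, f J ∂μ :=
    hTpres.integral_comp hemb f
  -- rewrite the RHS as an integral over μ
  have hmap0 : (gaussianReal 0 (Λ A ^ 2)).map (· + c) = gaussianReal c (Λ A ^ 2) := by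
    have := gaussianReal_map_add_const (μ := 0) (v := Λ A ^ 2) c
    simpa using this
  have hRHS : ∫ x, -x ^ 3 * Real.tanh (β * x) ∂(gaussianReal 0 (Λ A ^ 2)) = ∫ J, g J ∂μ := by
    have hmeas1 : AEStronglyMeasurable (fun y : ℝ => -(y - c)^3 * Real.tanh (β * (y - c)))
        ((gaussianReal 0 (Λ A ^ 2)).map (· + c)) := by
      refine Continuous.aestronglyMeasurable ?_
      exact ((((continuous_id.sub continuous_const).pow 3).neg).mul
        (continuous_tanh'.comp (continuous_const.mul (continuous_id.sub continuous_const))))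
    calc ∫ x, -x ^ 3 * Real.tanh (β * x) ∂(gaussianReal 0 (Λ A ^ 2))
        = ∫ y, -(y - c)^3 * Real.tanh (β * (y - c)) ∂(gaussianReal c (Λ A ^ 2)) := by
          rw [← hmap0, integral_map (measurable_add_const c).aemeasurable hmeas1]
          simp
      _ = ∫ J, g J ∂μ := by
          have hmeas2 : AEStronglyMeasurable (fun y : ℝ => -(y - c)^3 * Real.tanh (β * (y - c)))
              (μ.map (fun J => J a)) := by
            rw [heval]
            refine Continuous.aestronglyMeasurable ?_
            exact ((((continuous_id.sub continuous_const).pow 3).neg).mul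
              (continuous_tanh'.comp (continuous_const.mul (continuous_id.sub continuous_const))))
          rw [← heval, integral_map (measurable_pi_apply a).aemeasurable hmeas2]
  rw [ge_iff_le, hRHS]
  have h1 : ∫ J, g J ∂μ ≤ ∫ J, (f J + f (T J)) / 2 ∂μ :=
    integral_mono hgint ((hfint.add hfTint).div_const 2) hpt
  have h2 : ∫ J, (f J + f (T J)) / 2 ∂μ = ∫ J, f J ∂μ := by
    rw [integral_div, integral_add hfint hfTint, hint2]
    ring
  calc ∫ J, g J ∂μ ≤ ∫ J, (f J + f (T J)) / 2 ∂μ := h1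
    _ = ∫ J, f J ∂μ := h2
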